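/- Let I = (S, U, E) be a set cover instance with S partitioned into S_1, …, S_k, let T = (A, B, E_T) be a bipartite graph with A partitioned into A_1, …, A_m and B partitioned into B_1, …, B_k where B_j is identified with S_j, and let I' be the product instance. Suppose that no subset of S of cardinality at most k covers U in I. Then for every X ⊆ S that covers U' in I' and every i ∈ [m], there exists a vertex a ∈ A_i having at least k+1 neighbors (in T) in X. -/
import Mathlib


/-- Let `I = (S, U, E)` be a set cover instance with `S` partitioned into
`S_1, …, S_k` (modelled as `S = Σ j, Sfam j`), `T = (A, B, E_T)` a bipartite graph with
`A` partitioned into `A_1, …, A_m` (modelled as `Σ i, Afam i`) and `B_j` identified with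
`S_j`, and let `I'` be the product instance: universe `U' = Σ i, (Afam i → U)`, with `s`
adjacent to `⟨i, f⟩` iff there is `a ∈ A_i` with `{a, s} ∈ E_T` and `{s, f a} ∈ E`.
Suppose no subset of `S` of cardinality at most `k` covers `U` in `I`.  Then for every
`X ⊆ S` covering `U'` in `I'` and every `i ∈ [m]`, there is a vertex `a ∈ A_i` having at
least `k+1` neighbors (in `T`) in `X` (i.e. some `Y ⊆ X` of cardinality at least `k+1`
all of whose elements are adjacent to `a` in `T`). -/
theorem product_soundness_claim
    (k m : ℕ) (Sfam : Fin k → Type) (U : Type)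
    (E : (Σ j, Sfam j) → U → Prop)
    (Afam : Fin m → Type)
    (ET : (Σ i, Afam i) → (Σ j, Sfam j) → Prop)
    (hnocov : ¬ ∃ C : Finset (Σ j, Sfam j), C.card ≤ k ∧ ∀ u : U, ∃ s ∈ C, E s u)
    (X : Finset (Σ j, Sfam j))
    (hX : ∀ u' : Σ i, (Afam i → U), ∃ s ∈ X,
      ∃ a : Afam u'.1, ET ⟨u'.1, a⟩ s ∧ E s (u'.2 a)) :
    ∀ i : Fin m, ∃ a : Afam i, ∃ Y : Finset (Σ j, Sfam j),
      Y ⊆ X ∧ k + 1 ≤ Y.card ∧ ∀ s ∈ Y, ET ⟨i, a⟩ s := by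
  classical
  intro i
  by_contra hcon
  push_neg at hcon
  -- for each a, the neighborhood of a in X has card ≤ k
  have hsmall : ∀ a : Afam i, (X.filter (fun s => ET ⟨i, a⟩ s)).card ≤ k := by
    intro a
    by_contra h
    push_neg at h
    exact absurd (hcon a (X.filter (fun s => ET ⟨i, a⟩ s)) (Finset.filter_subset _ _) h)
      (by simp [Finset.mem_filter])
  -- so each neighborhood fails to cover U
  have hwit : ∀ a : Afam i, ∃ u : U,
      ∀ s ∈ X.filter (fun s => ET ⟨i, a⟩ s), ¬ E s u := by
    intro a
    by_contra h
    push_neg at h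
    exact hnocov ⟨X.filter (fun s => ET ⟨i, a⟩ s), hsmall a, h⟩
  choose f hf using hwit
  obtain ⟨s, hsX, a, hET, hE⟩ := hX ⟨i, f⟩
  exact hf a s (Finset.mem_filter.mpr ⟨hsX, hET⟩) hE
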